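/- (Kerzman–Stein identity.) Let H be a complex Hilbert space, M ⊆ H a closed subspace, S the orthogonal projection of H onto M, and C : H → H a bounded linear operator with C ∘ C = C and range(C) = M. Set A = C* − C. Then S ∘ (I − A) = C; consequently I − A is invertible with bounded inverse and S = C ∘ (I − A)⁻¹. -/

import Mathlib

open ContinuousLinearMap Complex


/-- **Kerzman–Stein identity.** If `S` is the orthogonal projection of a
complex Hilbert space `H` onto a closed subspace `M`, and `C` is a bounded (not
necessarily orthogonal) projection of `H` with range `M`, then with `A = C* - C` one has
`S ∘ (I - A) = C`; consequently `I - A` is invertible with bounded inverse and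
`S = C ∘ (I - A)⁻¹`. -/
theorem statement3 {H : Type*} [NormedAddCommGroup H] [InnerProductSpace ℂ H]
    [CompleteSpace H] (M : Submodule ℂ H) [CompleteSpace M]
    (C : H →L[ℂ] H) (hidem : C.comp C = C) (hrange : LinearMap.range (C : H →ₗ[ℂ] H) = M) :
    (M.subtypeL.comp (M.orthogonalProjectionOnto)).comp
        (1 - (ContinuousLinearMap.adjoint C - C)) = C ∧
      ∃ B : H →L[ℂ] H,
        (1 - (ContinuousLinearMap.adjoint C - C)).comp B = 1 ∧
        B.comp (1 - (ContinuousLinearMap.adjoint C - C)) = 1 ∧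
        M.subtypeL.comp (M.orthogonalProjectionOnto) = C.comp B := by
  set S : H →L[ℂ] H := M.subtypeL.comp (M.orthogonalProjectionOnto) with hS
  -- S ∘ C = C
  have hSC : S * C = C := by
    ext x
    have hx : C x ∈ M := hrange ▸ LinearMap.mem_range_self C.toLinearMap x
    simp [hS, ContinuousLinearMap.mul_apply, Submodule.starProjection_eq_self_iff.mpr, 
      Submodule.orthogonalProjectionOnto_mem_subspace_eq_self (⟨C x, hx⟩ : M)]
  -- C ∘ S = S
  have hCS : C * S = S := by
    ext x
    have hx : S x ∈ M := by
      simp [hS]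
    obtain ⟨y, hy⟩ := hrange.symm ▸ hx
    have : C (S x) = S x := by
      rw [← hy, ContinuousLinearMap.coe_coe, ← ContinuousLinearMap.comp_apply, hidem]
    simpa [ContinuousLinearMap.mul_apply] using this
  have hSsa : IsSelfAdjoint S := isSelfAdjoint_starProjection M
  -- S ∘ C* = S
  have hSCstar : S * ContinuousLinearMap.adjoint C = S := by
    have h := congrArg star hCS
    rwa [star_mul, hSsa.star_eq, star_eq_adjoint] at h
  have key : S * (1 - (ContinuousLinearMap.adjoint C - C)) = C := by
    rw [mul_sub, mul_one, mul_sub, hSCstar, hSC]; abel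
  set A : H →L[ℂ] H := ContinuousLinearMap.adjoint C - C with hA
  have hskew : star A = -A := by
    simp [hA, star_sub, star_eq_adjoint, adjoint_adjoint]
  set T : H →L[ℂ] H := Complex.I • A with hT
  have hTsa : IsSelfAdjoint T := by
    rw [IsSelfAdjoint, hT, star_smul, hskew]
    simp [Complex.conj_I, smul_neg, neg_smul]
  have hInotmem : (Complex.I : ℂ) ∉ spectrum ℂ T := by
    intro hmem
    have := hTsa.mem_spectrum_eq_re hmem
    simp at this
  have hu2 : IsUnit (T + (-Complex.I) • (1 : H →L[ℂ] H)) := by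
    have h := (spectrum.notMem_iff).mp hInotmem
    have : T + (-Complex.I) • (1 : H →L[ℂ] H) = -((algebraMap ℂ (H →L[ℂ] H)) Complex.I - T) := by
      rw [Algebra.algebraMap_eq_smul_one, neg_smul]
      abel
    rw [this]
    exact h.neg
  have hu1 : IsUnit ((Complex.I) • (1 : H →L[ℂ] H)) := by
    rw [← Algebra.algebraMap_eq_smul_one]
    exact (Ne.isUnit Complex.I_ne_zero).map (algebraMap ℂ (H →L[ℂ] H))
  have hfactor : ((Complex.I) • (1 : H →L[ℂ] H)) * (T + (-Complex.I) • 1) = 1 - A := by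
    rw [smul_mul_assoc, one_mul, smul_add, smul_smul]
    simp [hT, smul_smul, Complex.I_mul_I]
    abel
  have hunit : IsUnit (1 - A) := hfactor ▸ hu1.mul hu2
  refine ⟨key, ↑hunit.unit⁻¹, ?_, ?_, ?_⟩
  · exact hunit.mul_val_inv
  · exact hunit.val_inv_mul
  · calc S = S * ((1 - A) * ↑hunit.unit⁻¹) := by rw [hunit.mul_val_inv, mul_one]
    _ = (S * (1 - A)) * ↑hunit.unit⁻¹ := by rw [mul_assoc]
    _ = C * ↑hunit.unit⁻¹ := by rw [key]
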